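/- Let p ∈ ℂ[X] be a Shabat polynomial of degree n ≥ 2 whose coefficient of Xⁿ⁻¹ is zero, and let X₀ denote the sum of the distinct complex roots of p − 1. If X₀ ≠ 0, then the polynomial q defined by q(z) = p(X₀·z) is a Shabat polynomial in Zapponi form: the sum of the distinct roots of q − 1 equals 1 and the sum of the distinct roots of q + 1 equals −1. -/

import Mathlib

open Polynomial

lemma sum_roots_zero (f : ℂ[X]) (hf : 0 < f.natDegree)
    (h : f.coeff (f.natDegree - 1) = 0) : f.roots.sum = 0 := by
  have hf0 : f ≠ 0 := fun h0 => by simp [h0] at hf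
  have hl : f.leadingCoeff ≠ 0 := leadingCoeff_ne_zero.2 hf0
  have hinv : f.leadingCoeff⁻¹ ≠ 0 := inv_ne_zero hl
  set g := C f.leadingCoeff⁻¹ * f with hg
  have hmo : g.Monic := by
    rw [hg, mul_comm]; exact monic_mul_leadingCoeff_inv hf0
  have hnd : g.natDegree = f.natDegree := natDegree_C_mul hinv
  have hroots : g.roots = f.roots := roots_C_mul f hinv
  have hsplit : g.Splits := IsAlgClosed.splits g
  have key := Splits.nextCoeff_eq_neg_sum_roots_of_monic hsplit hmo
  rw [hroots, nextCoeff_of_natDegree_pos (by omega : 0 < g.natDegree), hnd,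
    hg, coeff_C_mul, h, mul_zero] at key
  exact neg_eq_zero.mp key.symm

lemma sum_roots_count (f : ℂ[X]) :
    f.roots.sum = ∑ a ∈ f.roots.toFinset, (f.rootMultiplicity a) • a := by
  rw [Finset.sum_multiset_count]
  exact Finset.sum_congr rfl fun a _ => by rw [count_roots]

/-- The key balance identity: the sum of distinct roots of `p + 1` is the
negative of the sum of distinct roots of `p - 1`. -/
lemma sum_distinct_roots_balance
    (p : Polynomial ℂ) (n : ℕ) (hn : 2 ≤ n) (hdeg : p.natDegree = n)
    (hShabat : ∀ z : ℂ, (Polynomial.derivative p).eval z = 0 →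
      p.eval z = 1 ∨ p.eval z = -1)
    (hcoeff : p.coeff (n - 1) = 0)
    (X₀ : ℂ) (hX₀ : X₀ = ((p - 1).roots.toFinset.sum id)) :
    ((p + 1).roots.toFinset.sum id) = -X₀ := by
  set f₁ := p - 1 with hf₁
  set f₂ := p + 1 with hf₂
  set d := derivative p with hd
  have h1 : (1 : ℂ[X]) = C 1 := by simp
  have hnd₁ : f₁.natDegree = n := by rw [hf₁, h1, natDegree_sub_C, hdeg]
  have hnd₂ : f₂.natDegree = n := by rw [hf₂, h1, natDegree_add_C, hdeg]
  have hf₁0 : f₁ ≠ 0 := fun h0 => by rw [h0] at hnd₁; simp at hnd₁; omega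
  have hf₂0 : f₂ ≠ 0 := fun h0 => by rw [h0] at hnd₂; simp at hnd₂; omega
  have hndd : d.natDegree = n - 1 := by
    apply natDegree_eq_of_degree_eq_some
    rw [hd, degree_derivative_eq p (by omega : 0 < p.natDegree), hdeg]
  have hd0 : d ≠ 0 := fun h0 => by rw [h0] at hndd; simp at hndd; omega
  have hs₁ : f₁.roots.sum = 0 := by
    apply sum_roots_zero _ (by omega : 0 < f₁.natDegree)
    rw [hnd₁, hf₁, coeff_sub, hcoeff, h1, coeff_C, if_neg (by omega : ¬ n - 1 = 0)]; ring
  have hs₂ : f₂.roots.sum = 0 := by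
    apply sum_roots_zero _ (by omega : 0 < f₂.natDegree)
    rw [hnd₂, hf₂, coeff_add, hcoeff, h1, coeff_C, if_neg (by omega : ¬ n - 1 = 0)]; ring
  have hsd : d.roots.sum = 0 := by
    apply sum_roots_zero _ (by omega : 0 < d.natDegree)
    rw [hndd, hd, coeff_derivative, show n - 1 - 1 + 1 = n - 1 by omega, hcoeff]; ring
  set A := f₁.roots.toFinset with hA
  set B := f₂.roots.toFinset with hB
  have hAB : Disjoint A B := by
    rw [Finset.disjoint_left]
    intro a ha hb
    rw [hA, Multiset.mem_toFinset, mem_roots hf₁0] at ha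
    rw [hB, Multiset.mem_toFinset, mem_roots hf₂0] at hb
    have ha' : p.eval a = 1 := by
      have := ha; rw [hf₁, IsRoot, eval_sub, eval_one, sub_eq_zero] at this; exact this
    have hb' : p.eval a = -1 := by
      have := hb; rw [hf₂, IsRoot, eval_add, eval_one, add_eq_zero_iff_eq_neg] at this; exact this
    rw [ha'] at hb'; norm_num at hb'
  have hDsub : d.roots.toFinset ⊆ A ∪ B := by
    intro r hr
    rw [Multiset.mem_toFinset, mem_roots hd0] at hr
    rcases hShabat r hr with h | h
    · exact Finset.mem_union_left _
        (by rw [hA, Multiset.mem_toFinset, mem_roots hf₁0]; simp [hf₁, IsRoot, h])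
    · exact Finset.mem_union_right _
        (by rw [hB, Multiset.mem_toFinset, mem_roots hf₂0]; simp [hf₂, IsRoot, h])
  have key : (0:ℂ) = ∑ r ∈ A ∪ B, ((d.rootMultiplicity r : ℂ) * r) := by
    rw [← hsd, sum_roots_count]
    rw [Finset.sum_subset hDsub]
    · exact Finset.sum_congr rfl fun r _ => by rw [nsmul_eq_mul]
    · intro r _ hrD
      rw [Multiset.mem_toFinset, mem_roots hd0] at hrD
      have : d.rootMultiplicity r = 0 := rootMultiplicity_eq_zero (fun h => hrD h)
      simp [this]
  rw [Finset.sum_union hAB] at key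
  have hAeq : ∑ r ∈ A, ((d.rootMultiplicity r : ℂ) * r)
      = f₁.roots.sum - A.sum id := by
    rw [sum_roots_count, ← Finset.sum_sub_distrib]
    apply Finset.sum_congr rfl
    intro r hr
    rw [hA, Multiset.mem_toFinset, mem_roots hf₁0] at hr
    have hdr : d = derivative f₁ := by rw [hf₁, derivative_sub, derivative_one, sub_zero, hd]
    have hm := derivative_rootMultiplicity_of_root hr
    rw [← hdr] at hm
    have h1le : 1 ≤ f₁.rootMultiplicity r := (rootMultiplicity_pos hf₁0).2 hr
    rw [hm, nsmul_eq_mul, Nat.cast_sub h1le, id]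
    push_cast
    ring
  have hBeq : ∑ r ∈ B, ((d.rootMultiplicity r : ℂ) * r)
      = f₂.roots.sum - B.sum id := by
    rw [sum_roots_count, ← Finset.sum_sub_distrib]
    apply Finset.sum_congr rfl
    intro r hr
    rw [hB, Multiset.mem_toFinset, mem_roots hf₂0] at hr
    have hdr : d = derivative f₂ := by rw [hf₂, derivative_add, derivative_one, add_zero, hd]
    have hm := derivative_rootMultiplicity_of_root hr
    rw [← hdr] at hm
    have h1le : 1 ≤ f₂.rootMultiplicity r := (rootMultiplicity_pos hf₂0).2 hr
    rw [hm, nsmul_eq_mul, Nat.cast_sub h1le, id]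
    push_cast
    ring
  rw [hAeq, hBeq, hs₁, hs₂, ← hX₀] at key
  linear_combination key

/-- Roots of the rescaled polynomial. -/
lemma rescale_roots_toFinset (p : Polynomial ℂ) (X₀ c : ℂ) (hne : X₀ ≠ 0)
    (q : Polynomial ℂ) (hq : ∀ z : ℂ, q.eval z = p.eval (X₀ * z))
    (hf0 : p - C c ≠ 0) (hg0 : q - C c ≠ 0) :
    (q - C c).roots.toFinset = (p - C c).roots.toFinset.image (fun a => X₀⁻¹ * a) := by
  ext z
  simp only [Finset.mem_image, Multiset.mem_toFinset, mem_roots hg0, mem_roots hf0,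
    IsRoot, eval_sub, eval_C, sub_eq_zero]
  constructor
  · intro h
    exact ⟨X₀ * z, by rw [← hq z]; exact h, by field_simp⟩
  · rintro ⟨a, ha, rfl⟩
    rw [hq, show X₀ * (X₀⁻¹ * a) = a by field_simp, ha]

/-- If `p` is a Shabat polynomial of degree `n ≥ 2` with vanishing coefficient of
`X^(n-1)` and the sum `X₀` of the distinct roots of `p - 1` is nonzero, then
`q(z) = p(X₀ z)` is a Shabat polynomial in Zapponi form. -/
theorem shabat_rescale_zapponi
    (p : Polynomial ℂ) (n : ℕ) (hn : 2 ≤ n) (hdeg : p.natDegree = n)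
    (hShabat : ∀ z : ℂ, (Polynomial.derivative p).eval z = 0 →
      p.eval z = 1 ∨ p.eval z = -1)
    (hcoeff : p.coeff (n - 1) = 0)
    (X₀ : ℂ) (hX₀ : X₀ = ((p - 1).roots.toFinset.sum id)) (hne : X₀ ≠ 0)
    (q : Polynomial ℂ) (hq : ∀ z : ℂ, q.eval z = p.eval (X₀ * z)) :
    (2 ≤ q.natDegree) ∧
    (∀ z : ℂ, (Polynomial.derivative q).eval z = 0 →
      q.eval z = 1 ∨ q.eval z = -1) ∧
    ((q - 1).roots.toFinset.sum id) = 1 ∧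
    ((q + 1).roots.toFinset.sum id) = -1 := by
  have hqq : q = p.comp (C X₀ * X) := by
    apply Polynomial.funext
    intro z
    rw [hq, eval_comp, eval_mul, eval_C, eval_X]
  have hqdeg : q.natDegree = n := by
    rw [hqq, natDegree_comp, natDegree_C_mul_X X₀ hne, hdeg, mul_one]
  have h1 : (1 : ℂ[X]) = C 1 := by simp
  have hm1 : (-1 : ℂ[X]) = C (-1) := by simp
  -- nonvanishing
  have hp10 : p - 1 ≠ 0 := fun h0 => by
    have : (p - 1).natDegree = n := by rw [h1, natDegree_sub_C, hdeg]
    rw [h0] at this; simp at this; omega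
  have hp20 : p + 1 ≠ 0 := fun h0 => by
    have : (p + 1).natDegree = n := by rw [h1, natDegree_add_C, hdeg]
    rw [h0] at this; simp at this; omega
  have hq10 : q - 1 ≠ 0 := fun h0 => by
    have : (q - 1).natDegree = n := by rw [h1, natDegree_sub_C, hqdeg]
    rw [h0] at this; simp at this; omega
  have hq20 : q + 1 ≠ 0 := fun h0 => by
    have : (q + 1).natDegree = n := by rw [h1, natDegree_add_C, hqdeg]
    rw [h0] at this; simp at this; omega
  have hBsum := sum_distinct_roots_balance p n hn hdeg hShabat hcoeff X₀ hX₀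
  -- injectivity of the rescaling map
  have hinj : Set.InjOn (fun a : ℂ => X₀⁻¹ * a) ↑((p - 1).roots.toFinset) :=
    fun a _ b _ hab => by
      simpa [inv_ne_zero hne] using mul_left_cancel₀ (inv_ne_zero hne) hab
  have hinj' : Set.InjOn (fun a : ℂ => X₀⁻¹ * a) ↑((p + 1).roots.toFinset) :=
    fun a _ b _ hab => mul_left_cancel₀ (inv_ne_zero hne) hab
  refine ⟨by omega, ?_, ?_, ?_⟩
  · intro z hz
    rw [hqq, derivative_comp, eval_mul, eval_comp, eval_mul, eval_C, eval_X] at hz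
    have hC : (derivative (C X₀ * X)).eval z = X₀ := by simp
    rw [hC] at hz
    rcases mul_eq_zero.1 hz with h | h
    · exact absurd h hne
    · rw [hq z]; exact hShabat _ h
  · have him := rescale_roots_toFinset p X₀ 1 hne q hq (by rw [← h1]; exact hp10)
      (by rw [← h1]; exact hq10)
    rw [← h1] at him
    rw [him, Finset.sum_image (fun a ha b hb hab => hinj ha hb hab)]
    simp only [id]
    rw [← Finset.mul_sum, show (∑ i ∈ (p - 1).roots.toFinset, i) = X₀ from hX₀.symm,
      inv_mul_cancel₀ hne]
  · have him := rescale_roots_toFinset p X₀ (-1) hne q hq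
      (by rw [← hm1, sub_neg_eq_add]; exact hp20)
      (by rw [← hm1, sub_neg_eq_add]; exact hq20)
    rw [← hm1, sub_neg_eq_add, sub_neg_eq_add] at him
    rw [him, Finset.sum_image (fun a ha b hb hab => hinj' ha hb hab)]
    simp only [id]
    rw [← Finset.mul_sum, show (∑ i ∈ (p + 1).roots.toFinset, i) = -X₀ from hBsum]
    field_simp
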